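/- arXiv:math/0310408 — 2 statements merged into one kernel-verified Lean document; each statement's English description precedes it below -/
import Mathlib

section
/- In the charged free fermion Fock space, if A : F → F is a charge-zero operator satisfying [A ⊗ A, Σ_{r ∈ 1/2 + ℤ} ψ⁺_r ⊗ ψ⁻_{-r}] = 0, then the vector A|0⟩ satisfies the fermionic Hirota bilinear equation Σ_{r ∈ 1/2 + ℤ} ψ⁺_r A|0⟩ ⊗ ψ⁻_{-r} A|0⟩ = 0. -/
open scoped TensorProduct

/-- In the charged free fermion Fock space `F`, index the fermion
modes by integers: `ψp m` stands for `ψ⁺_{m + 1/2}` and `ψm m` for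
`ψ⁻_{m + 1/2}` (so `r = m + 1/2 > 0` iff `0 ≤ m`, and the pairing
`ψ⁺_r ⊗ ψ⁻_{-r}` corresponds to `ψp m ⊗ ψm (-m-1)`).  If `A : F → F` is a
charge-zero operator (it commutes with the charge operator `α₀`) satisfying
`[A ⊗ A, Σ_{r ∈ 1/2+ℤ} ψ⁺_r ⊗ ψ⁻_{-r}] = 0`, then the vector `A|0⟩` satisfies
the fermionic Hirota bilinear equation
`Σ_{r ∈ 1/2+ℤ} ψ⁺_r A|0⟩ ⊗ ψ⁻_{-r} A|0⟩ = 0`. -/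
theorem hirota_bilinear_of_commutes
    (F : Type*) [AddCommGroup F] [Module ℂ F]
    (ψp ψm : ℤ → Module.End ℂ F) (vac : F)
    (α₀ A : Module.End ℂ F)
    -- the positive modes annihilate the vacuum:
    (hvacp : ∀ m : ℤ, 0 ≤ m → ψp m vac = 0)
    (hvacm : ∀ m : ℤ, 0 ≤ m → ψm m vac = 0)
    -- `A` has charge zero:
    (hcharge : A * α₀ = α₀ * A)
    -- `[A ⊗ A, Σ_r ψ⁺_r ⊗ ψ⁻_{-r}] = 0`:
    (hA : ∀ v : F ⊗[ℂ] F,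
      ∑ᶠ m : ℤ, TensorProduct.map (ψp m) (ψm (-m - 1)) (TensorProduct.map A A v)
        = TensorProduct.map A A (∑ᶠ m : ℤ, TensorProduct.map (ψp m) (ψm (-m - 1)) v)) :
    ∑ᶠ m : ℤ, (ψp m (A vac)) ⊗ₜ[ℂ] (ψm (-m - 1) (A vac)) = 0 := by
  have h := hA (vac ⊗ₜ[ℂ] vac)
  have hzero : ∀ m : ℤ,
      TensorProduct.map (ψp m) (ψm (-m - 1)) (vac ⊗ₜ[ℂ] vac) = 0 := by
    intro m
    rcases le_or_gt 0 m with hm | hm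
    · simp [TensorProduct.map_tmul, hvacp m hm]
    · have : (0 : ℤ) ≤ -m - 1 := by omega
      simp [TensorProduct.map_tmul, hvacm _ this]
  rw [finsum_congr hzero, finsum_zero, map_zero] at h
  have h2 : ∀ m : ℤ,
      TensorProduct.map (ψp m) (ψm (-m - 1)) (TensorProduct.map A A (vac ⊗ₜ[ℂ] vac))
        = (ψp m (A vac)) ⊗ₜ[ℂ] (ψm (-m - 1) (A vac)) := by
    intro m; simp [TensorProduct.map_tmul]
  rw [finsum_congr h2] at h
  exact h
end

section
/- The operators α_n = Σ_{r ∈ 1/2+ℤ} :ψ⁺_{-r} ψ⁻_{r+n}: on the fermionic Fock space satisfy the Heisenberg commutation relations [α_m, α_n] = m δ_{m,-n} · Id. -/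
/-- The boson mode `α_n = Σ_{r ∈ 1/2+ℤ} :ψ⁺_{-r} ψ⁻_{r+n}:` acting on a vector,
with half-integers coded by integers (`ψp m = ψ⁺_{m+1/2}`, `ψm m = ψ⁻_{m+1/2}`,
so that `r = m + 1/2`, `-r = (-m-1) + 1/2`, and `r + n = (m+n) + 1/2`), and the
normal ordering `:ψ⁺_a ψ⁻_b: = ψ⁺_a ψ⁻_b` if `b > 0` and `= -ψ⁻_b ψ⁺_a` if
`b < 0`. -/
noncomputable def bosonMode {F : Type*} [AddCommGroup F] [Module ℂ F]
    (ψp ψm : ℤ → Module.End ℂ F) (n : ℤ) (v : F) : F :=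
  ∑ᶠ m : ℤ,
    if 0 ≤ m + n then ψp (-m - 1) (ψm (m + n) v)
    else -(ψm (m + n) (ψp (-m - 1) v))

section Aux

variable {F : Type*} [AddCommGroup F] [Module ℂ F] (ψp ψm : ℤ → Module.End ℂ F)

/-- The summand of `bosonMode` as an endomorphism. -/
noncomputable def Aop (n m : ℤ) : Module.End ℂ F :=
  if 0 ≤ m + n then ψp (-m - 1) * ψm (m + n) else -(ψm (m + n) * ψp (-m - 1))

lemma Aop_apply (n m : ℤ) (v : F) :
    Aop ψp ψm n m v
      = if 0 ≤ m + n then ψp (-m - 1) (ψm (m + n) v)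
        else -(ψm (m + n) (ψp (-m - 1) v)) := by
  unfold Aop
  split_ifs <;> simp [Module.End.mul_apply]

lemma Aop_eq_sub
    (hpm : ∀ r s : ℤ, ψp r * ψm s + ψm s * ψp r = if r + s = -1 then 1 else 0)
    (n m : ℤ) :
    Aop ψp ψm n m = ψp (-m - 1) * ψm (m + n)
      - (if 0 ≤ m + n then 0 else if n = 0 then (1 : Module.End ℂ F) else 0) := by
  unfold Aop
  split_ifs with h1 h2
  · rw [sub_zero]
  · have h := hpm (-m - 1) (m + n)
    rw [if_pos (by omega)] at h
    rw [eq_sub_iff_add_eq, ← h]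
    abel
  · rw [sub_zero]
    have h := hpm (-m - 1) (m + n)
    rw [if_neg (by omega)] at h
    have h2 : ψp (-m - 1) * ψm (m + n) = -(ψm (m + n) * ψp (-m - 1)) :=
      eq_neg_of_add_eq_zero_left h
    rw [h2]

lemma sub_central_comm {R : Type*} [Ring R] (X Y s t : R)
    (hs : ∀ Z, s * Z = Z * s) (ht : ∀ Z, t * Z = Z * t) :
    (X - s) * (Y - t) - (Y - t) * (X - s) = X * Y - Y * X := by
  simp only [sub_mul, mul_sub]
  rw [hs Y, hs t, ← ht X]
  abel

lemma ferm_comm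
    (hpm : ∀ r s : ℤ, ψp r * ψm s + ψm s * ψp r = if r + s = -1 then 1 else 0)
    (hpp : ∀ r s : ℤ, ψp r * ψp s + ψp s * ψp r = 0)
    (hmm : ∀ r s : ℤ, ψm r * ψm s + ψm s * ψm r = 0)
    (a b c d : ℤ) :
    ψp a * ψm b * (ψp c * ψm d) - ψp c * ψm d * (ψp a * ψm b)
      = (if c + b = -1 then ψp a * ψm d else 0)
        - (if a + d = -1 then ψp c * ψm b else 0) := by
  have key : ∀ A B C D : Module.End ℂ F,
      A * B * (C * D) - C * D * (A * B)
        = A * (C * B + B * C) * D - (A * C + C * A) * (B * D)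
          + C * A * (B * D + D * B) - C * (A * D + D * A) * B := by
    intro A B C D; noncomm_ring
  rw [key, hpp a c, hmm b d, hpm c b, hpm a d]
  split_ifs <;> simp

lemma Aop_comm
    (hpm : ∀ r s : ℤ, ψp r * ψm s + ψm s * ψp r = if r + s = -1 then 1 else 0)
    (hpp : ∀ r s : ℤ, ψp r * ψp s + ψp s * ψp r = 0)
    (hmm : ∀ r s : ℤ, ψm r * ψm s + ψm s * ψm r = 0)
    (p q m k : ℤ) :
    Aop ψp ψm p m * Aop ψp ψm q k - Aop ψp ψm q k * Aop ψp ψm p m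
      = (if k = m + p then ψp (-m - 1) * ψm (k + q) else 0)
        - (if m = k + q then ψp (-k - 1) * ψm (m + p) else 0) := by
  rw [Aop_eq_sub ψp ψm hpm p m, Aop_eq_sub ψp ψm hpm q k,
    sub_central_comm (ψp (-m - 1) * ψm (m + p)) (ψp (-k - 1) * ψm (k + q)) _ _
      (fun Z => by split_ifs <;> simp) (fun Z => by split_ifs <;> simp),
    ferm_comm ψp ψm hpm hpp hmm (-m - 1) (m + p) (-k - 1) (k + q)]
  congr 1
  · exact if_congr (by omega) rfl rfl
  · exact if_congr (by omega) rfl rfl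

lemma bosonMode_eq_sum (n : ℤ) (v : F) (N : ℕ)
    (hN : ∀ m : ℤ, (N : ℤ) ≤ m → ψp m v = 0 ∧ ψm m v = 0)
    (M : ℤ) (hM : (N : ℤ) + n.natAbs + 1 ≤ M) :
    bosonMode ψp ψm n v = ∑ m ∈ Finset.Icc (-M) M, Aop ψp ψm n m v := by
  have hsupp : (Function.support fun m : ℤ =>
      if 0 ≤ m + n then ψp (-m - 1) (ψm (m + n) v)
      else -(ψm (m + n) (ψp (-m - 1) v))) ⊆ ↑(Finset.Icc (-M) M) := by
    intro m hm
    rw [Function.mem_support] at hm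
    by_contra hmem
    simp only [Finset.coe_Icc, Set.mem_Icc, not_and_or, not_le] at hmem
    apply hm
    rcases hmem with h | h
    · rw [if_neg (by omega), (hN (-m - 1) (by omega)).1, map_zero, neg_zero]
    · rw [if_pos (by omega), (hN (m + n) (by omega)).2, map_zero]
  unfold bosonMode
  rw [finsum_eq_sum_of_support_subset _ hsupp]
  exact Finset.sum_congr rfl fun m _ => (Aop_apply ψp ψm n m v).symm

lemma sum_interval_eval {F : Type*} [AddCommGroup F] (f : ℤ → F) (w : F)
    (lo hi A B : ℤ)
    (hlo : ∀ m, m < lo → f m = w) (hhi : ∀ m, hi < m → f m = 0)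
    (hA : A ≤ lo) (hlh : lo ≤ hi + 1) (hB : hi ≤ B) :
    ∑ m ∈ Finset.Icc A B, f m = (lo - A).toNat • w + ∑ m ∈ Finset.Icc lo hi, f m := by
  have e0 : Finset.Icc A B = Finset.Icc A (lo - 1) ∪ Finset.Icc lo B := by
    ext x; simp only [Finset.mem_union, Finset.mem_Icc]; omega
  have e0' : Finset.Icc lo B = Finset.Icc lo hi ∪ Finset.Icc (hi + 1) B := by
    ext x; simp only [Finset.mem_union, Finset.mem_Icc]; omega
  have d0 : Disjoint (Finset.Icc A (lo - 1)) (Finset.Icc lo B) := by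
    rw [Finset.disjoint_left]; intro x hx hx'
    simp only [Finset.mem_Icc] at hx hx'; omega
  have d0' : Disjoint (Finset.Icc lo hi) (Finset.Icc (hi + 1) B) := by
    rw [Finset.disjoint_left]; intro x hx hx'
    simp only [Finset.mem_Icc] at hx hx'; omega
  rw [e0, Finset.sum_union d0, e0', Finset.sum_union d0']
  have e1 : ∑ m ∈ Finset.Icc A (lo - 1), f m = (lo - A).toNat • w := by
    rw [Finset.sum_congr rfl fun m hm =>
      hlo m (by simp only [Finset.mem_Icc] at hm; omega), Finset.sum_const,
      Int.card_Icc]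
    congr 1
    omega
  have e3 : ∑ m ∈ Finset.Icc (hi + 1) B, f m = 0 :=
    Finset.sum_eq_zero fun m hm =>
      hhi m (by simp only [Finset.mem_Icc] at hm; omega)
  rw [e1, e3, add_zero]

lemma final_sum {F : Type*} [AddCommGroup F] (g : ℤ → F) (w : F) (N0 : ℕ)
    (p q M : ℤ)
    (hlo : ∀ m : ℤ, m < -(N0 : ℤ) → g m = w)
    (hhi : ∀ m : ℤ, (N0 : ℤ) + p.natAbs + q.natAbs < m → g m = 0)
    (hMbig : (N0 : ℤ) + 2 * p.natAbs + 2 * q.natAbs + 1 ≤ M) :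
    ∑ m ∈ Finset.Icc (-M - min 0 p) (M - max 0 p), g m
      - ∑ m ∈ Finset.Icc (-M - min 0 q) (M - max 0 q), g m
    = (min 0 p - min 0 q) • w := by
  have s1 := sum_interval_eval g w (-(N0 : ℤ)) ((N0 : ℤ) + p.natAbs + q.natAbs)
      (-M - min 0 p) (M - max 0 p) hlo hhi (by omega) (by omega) (by omega)
  have s2 := sum_interval_eval g w (-(N0 : ℤ)) ((N0 : ℤ) + p.natAbs + q.natAbs)
      (-M - min 0 q) (M - max 0 q) hlo hhi (by omega) (by omega) (by omega)
  rw [s1, s2, add_sub_add_right_eq_sub, ← natCast_zsmul w, ← natCast_zsmul w, ← sub_smul]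
  congr 1
  omega

end Aux

/-- The operators `α_n = Σ_r :ψ⁺_{-r} ψ⁻_{r+n}:` on the fermionic
Fock space satisfy the Heisenberg commutation relations
`[α_p, α_q] = p δ_{p,-q} · Id`.  Here the fermions satisfy the
anticommutation relations `[ψ⁺_r, ψ⁻_s]₊ = δ_{r,-s}` (i.e. `r + s = 0`, which
in integer coding reads `r + s = -1`), `[ψ±_r, ψ±_s]₊ = 0`, and every vector
is annihilated by all sufficiently positive modes. -/
theorem boson_modes_heisenberg
    (F : Type*) [AddCommGroup F] [Module ℂ F]
    (ψp ψm : ℤ → Module.End ℂ F)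
    (hpm : ∀ r s : ℤ, ψp r * ψm s + ψm s * ψp r = if r + s = -1 then 1 else 0)
    (hpp : ∀ r s : ℤ, ψp r * ψp s + ψp s * ψp r = 0)
    (hmm : ∀ r s : ℤ, ψm r * ψm s + ψm s * ψm r = 0)
    (hfin : ∀ v : F, ∃ N : ℕ, ∀ m : ℤ, (N : ℤ) ≤ m → ψp m v = 0 ∧ ψm m v = 0) :
    ∀ (p q : ℤ) (v : F),
      bosonMode ψp ψm p (bosonMode ψp ψm q v) - bosonMode ψp ψm q (bosonMode ψp ψm p v)
        = if p + q = 0 then (p : ℂ) • v else 0 := by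
  intro p q v
  obtain ⟨N0, hN0⟩ := hfin v
  obtain ⟨N1, hN1⟩ := hfin (bosonMode ψp ψm q v)
  obtain ⟨N2, hN2⟩ := hfin (bosonMode ψp ψm p v)
  set M : ℤ := ((N0 : ℤ) + N1 + N2) + 2 * (p.natAbs + q.natAbs) + 2 with hM
  have hM1 : (N1 : ℤ) + p.natAbs + 1 ≤ M := by rw [hM]; omega
  have hM2 : (N2 : ℤ) + q.natAbs + 1 ≤ M := by rw [hM]; omega
  have hM0p : (N0 : ℤ) + p.natAbs + 1 ≤ M := by rw [hM]; omega
  have hM0q : (N0 : ℤ) + q.natAbs + 1 ≤ M := by rw [hM]; omega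
  have h1 : bosonMode ψp ψm p (bosonMode ψp ψm q v)
      = ∑ m ∈ Finset.Icc (-M) M, ∑ k ∈ Finset.Icc (-M) M,
          Aop ψp ψm p m (Aop ψp ψm q k v) := by
    rw [bosonMode_eq_sum ψp ψm p _ N1 hN1 M hM1]
    refine Finset.sum_congr rfl fun m _ => ?_
    rw [bosonMode_eq_sum ψp ψm q v N0 hN0 M hM0q]
    exact map_sum _ _ _
  have h2 : bosonMode ψp ψm q (bosonMode ψp ψm p v)
      = ∑ m ∈ Finset.Icc (-M) M, ∑ k ∈ Finset.Icc (-M) M,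
          Aop ψp ψm q k (Aop ψp ψm p m v) := by
    rw [bosonMode_eq_sum ψp ψm q _ N2 hN2 M hM2]
    have h2' : ∀ k ∈ Finset.Icc (-M) M,
        Aop ψp ψm q k (bosonMode ψp ψm p v)
          = ∑ m ∈ Finset.Icc (-M) M, Aop ψp ψm q k (Aop ψp ψm p m v) := by
      intro k _
      rw [bosonMode_eq_sum ψp ψm p v N0 hN0 M hM0p]
      exact map_sum _ _ _
    rw [Finset.sum_congr rfl h2']
    exact Finset.sum_comm
  rw [h1, h2, ← Finset.sum_sub_distrib]
  have key : ∀ m ∈ Finset.Icc (-M) M,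
      ((∑ k ∈ Finset.Icc (-M) M, Aop ψp ψm p m (Aop ψp ψm q k v))
        - ∑ k ∈ Finset.Icc (-M) M, Aop ψp ψm q k (Aop ψp ψm p m v))
      = (if m + p ∈ Finset.Icc (-M) M then ψp (-m - 1) (ψm (m + p + q) v) else 0)
        - (if m - q ∈ Finset.Icc (-M) M then ψp (-(m - q) - 1) (ψm (m + p) v) else 0) := by
    intro m _
    rw [← Finset.sum_sub_distrib]
    have e1 : ∀ k, Aop ψp ψm p m (Aop ψp ψm q k v) - Aop ψp ψm q k (Aop ψp ψm p m v)
        = (if k = m + p then ψp (-m - 1) (ψm (k + q) v) else 0)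
          - (if k = m - q then ψp (-k - 1) (ψm (m + p) v) else 0) := by
      intro k
      have h := congrArg (fun T : Module.End ℂ F => T v)
        (Aop_comm ψp ψm hpm hpp hmm p q m k)
      simp only [LinearMap.sub_apply, Module.End.mul_apply, LinearMap.zero_apply,
        apply_ite (fun T : Module.End ℂ F => T v)] at h
      rw [h]
      simp only [show (m = k + q) ↔ (k = m - q) from by omega]
    rw [Finset.sum_congr rfl fun k _ => e1 k, Finset.sum_sub_distrib,
      Finset.sum_ite_eq' (Finset.Icc (-M) M) (m + p)
        (fun k => ψp (-m - 1) (ψm (k + q) v)),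
      Finset.sum_ite_eq' (Finset.Icc (-M) M) (m - q)
        (fun k => ψp (-k - 1) (ψm (m + p) v))]
  rw [Finset.sum_congr rfl key, Finset.sum_sub_distrib]
  have hA : (∑ m ∈ Finset.Icc (-M) M,
        if m + p ∈ Finset.Icc (-M) M then ψp (-m - 1) (ψm (m + p + q) v) else 0)
      = ∑ m ∈ Finset.Icc (-M - min 0 p) (M - max 0 p), ψp (-m - 1) (ψm (m + p + q) v) := by
    rw [← Finset.sum_filter]
    apply Finset.sum_congr _ fun _ _ => rfl
    ext x
    simp only [Finset.mem_filter, Finset.mem_Icc]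
    omega
  have hB : (∑ m ∈ Finset.Icc (-M) M,
        if m - q ∈ Finset.Icc (-M) M then ψp (-(m - q) - 1) (ψm (m + p) v) else 0)
      = ∑ m ∈ Finset.Icc (-M - min 0 q) (M - max 0 q), ψp (-m - 1) (ψm (m + p + q) v) := by
    rw [← Finset.sum_filter,
      show Finset.filter (fun m => m - q ∈ Finset.Icc (-M) M) (Finset.Icc (-M) M)
        = Finset.Icc ((-M - min 0 q) + q) ((M - max 0 q) + q) from by
          ext x; simp only [Finset.mem_filter, Finset.mem_Icc]; omega,
      ← Finset.map_add_right_Icc, Finset.sum_map]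
    apply Finset.sum_congr rfl
    intro x _
    simp only [addRightEmbedding_apply]
    rw [show -(x + q - q) - 1 = -x - 1 from by ring,
      show x + q + p = x + p + q from by ring]
  rw [hA, hB]
  have hfinal := final_sum (fun x : ℤ => ψp (-x - 1) (ψm (x + p + q) v))
      (if p + q = 0 then v else 0) N0 p q M
      (by
        intro m hm
        show ψp (-m - 1) (ψm (m + p + q) v) = if p + q = 0 then v else 0
        have hp0 : ψp (-m - 1) v = 0 := (hN0 (-m - 1) (by omega)).1
        have h := congrArg (fun T : Module.End ℂ F => T v) (hpm (-m - 1) (m + p + q))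
        simp only [LinearMap.add_apply, Module.End.mul_apply,
          apply_ite (fun T : Module.End ℂ F => T v), Module.End.one_apply,
          LinearMap.zero_apply] at h
        rw [hp0, map_zero, add_zero] at h
        rw [h]
        congr 1
        exact propext (by omega))
      (by
        intro m hm
        show ψp (-m - 1) (ψm (m + p + q) v) = 0
        rw [(hN0 (m + p + q) (by omega)).2, map_zero])
      (by rw [hM]; omega)
  refine hfinal.trans ?_
  split_ifs with hc
  · rw [show min 0 p - min 0 q = p from by omega]
    exact (Int.cast_smul_eq_zsmul ℂ p v).symm
  · rw [smul_zero]
end
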